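/- The Werner state W = (3/4)·(1/4)𝟙 + (1/4)Ψ₁ on ℂ²⊗ℂ² (i.e., W_{ψ₁,1/3} with ε = 1/3) is separable. -/

import Mathlib

open Matrix ComplexOrder Kronecker

/-- Squared Hilbert-Schmidt norm: ‖A‖²_HS = tr(A*A). -/
noncomputable def hsNormSq {n : Type*} [Fintype n] (A : Matrix n n ℂ) : ℝ :=
  (Aᴴ * A).trace.re

/-- A density matrix: positive semidefinite with trace 1. -/
def IsDensity {n : Type*} [Fintype n] [DecidableEq n] (ρ : Matrix n n ℂ) : Prop :=
  ρ.PosSemidef ∧ ρ.trace = 1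

/-- A separable (disentangled) state: a finite convex combination of
tensor products of density matrices. -/
def IsSepState {m n : Type*} [Fintype m] [Fintype n] [DecidableEq m] [DecidableEq n]
    (ρ : Matrix (m × n) (m × n) ℂ) : Prop :=
  ∃ (k : ℕ) (p : Fin k → ℝ) (ρ₁ : Fin k → Matrix m m ℂ) (ρ₂ : Fin k → Matrix n n ℂ),
    (∀ i, 0 ≤ p i) ∧ (∑ i, p i = 1) ∧ (∀ i, IsDensity (ρ₁ i)) ∧ (∀ i, IsDensity (ρ₂ i)) ∧
    ρ = ∑ i, (p i : ℂ) • ((ρ₁ i) ⊗ₖ (ρ₂ i))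

/-- The rank-one projector |v⟩⟨v| onto a vector v. -/
noncomputable def proj {n : Type*} [Fintype n] (v : n → ℂ) : Matrix n n ℂ :=
  Matrix.vecMulVec v (star v)

/-- The four Bell vectors ψ₁,ψ₂,ψ₃,ψ₄ on ℂ²⊗ℂ². -/
noncomputable def bell (i : Fin 4) (p : Fin 2 × Fin 2) : ℂ :=
  (((Real.sqrt 2 : ℝ) : ℂ))⁻¹ *
    (if i = 0 then (if p = (0, 0) then 1 else if p = (1, 1) then 1 else 0)
     else if i = 1 then (if p = (0, 0) then 1 else if p = (1, 1) then -1 else 0)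
     else if i = 2 then (if p = (0, 1) then 1 else if p = (1, 0) then 1 else 0)
     else (if p = (0, 1) then 1 else if p = (1, 0) then -1 else 0))

/-! ### Auxiliary material for the separability proof -/

noncomputable def rr : ℂ := (((Real.sqrt 2 : ℝ) : ℂ))⁻¹

lemma rr_mul_rr : rr * rr = 2⁻¹ := by
  rw [rr, ← mul_inv]
  norm_cast
  rw [Real.mul_self_sqrt (by norm_num)]
  norm_num

lemma rr_sq : rr ^ 2 = 2⁻¹ := by rw [sq, rr_mul_rr]

lemma rr_pow4 : rr ^ 4 = 4⁻¹ := by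
  have : rr ^ 4 = (rr ^ 2) ^ 2 := by ring
  rw [this, rr_sq]; norm_num

lemma rr_conj : (starRingEnd ℂ) rr = rr := by
  simp [rr, ← Complex.ofReal_inv]

/-- First-factor states: |0⟩, |1⟩, |±x⟩, |±y⟩. -/
noncomputable def aVec : Fin 6 → Fin 2 → ℂ
  | 0 => ![1, 0]
  | 1 => ![0, 1]
  | 2 => ![rr, rr]
  | 3 => ![rr, -rr]
  | 4 => ![rr, rr * Complex.I]
  | 5 => ![rr, -(rr * Complex.I)]

/-- Second-factor states: same as `aVec` but with the two `y`-states swapped. -/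
noncomputable def bVec : Fin 6 → Fin 2 → ℂ
  | 0 => ![1, 0]
  | 1 => ![0, 1]
  | 2 => ![rr, rr]
  | 3 => ![rr, -rr]
  | 4 => ![rr, -(rr * Complex.I)]
  | 5 => ![rr, rr * Complex.I]

lemma proj_psd {n : Type*} [Fintype n] (v : n → ℂ) : (proj v).PosSemidef := by
  have : proj v = replicateCol Unit v * (replicateCol Unit v)ᴴ := by
    rw [conjTranspose_replicateCol, ← vecMulVec_eq]; rfl
  rw [this]
  exact posSemidef_self_mul_conjTranspose _

lemma proj_trace (v : Fin 2 → ℂ) :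
    (proj v).trace = v 0 * (starRingEnd ℂ) (v 0) + v 1 * (starRingEnd ℂ) (v 1) := by
  simp [proj, trace, vecMulVec, Matrix.diag, Fin.sum_univ_two]

lemma aVec_density (i : Fin 6) : IsDensity (proj (aVec i)) := by
  refine ⟨proj_psd _, ?_⟩
  fin_cases i <;>
    simp [proj_trace, aVec, rr_conj, _root_.map_mul, mul_mul_mul_comm, rr_mul_rr,
      Complex.conj_I] <;> ring_nf

lemma bVec_density (i : Fin 6) : IsDensity (proj (bVec i)) := by
  refine ⟨proj_psd _, ?_⟩
  fin_cases i <;>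
    simp [proj_trace, bVec, rr_conj, _root_.map_mul, mul_mul_mul_comm, rr_mul_rr,
      Complex.conj_I] <;> ring_nf

lemma bell_rr (p : Fin 2 × Fin 2) :
    bell 0 p = rr * (if p = (0, 0) then 1 else if p = (1, 1) then 1 else 0) := by
  simp [bell, rr]

theorem werner_eq :
    ((6 : ℂ)⁻¹ • (1 : Matrix (Fin 2 × Fin 2) (Fin 2 × Fin 2) ℂ)
      + (3 : ℂ)⁻¹ • proj (bell 0))
    = ∑ i : Fin 6, ((6⁻¹ : ℝ) : ℂ) • ((proj (aVec i)) ⊗ₖ (proj (bVec i))) := by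
  ext ⟨i, j⟩ ⟨k, l⟩
  fin_cases i <;> fin_cases j <;> fin_cases k <;> fin_cases l <;>
    simp [Fin.sum_univ_six, proj, vecMulVec, aVec, bVec, bell_rr, Matrix.one_apply,
      kroneckerMap_apply, Matrix.sum_apply, Matrix.add_apply, Matrix.smul_apply,
      rr_conj, _root_.map_mul, Complex.conj_I, Prod.ext_iff] <;>
    ring_nf <;>
    simp [mul_mul_mul_comm, rr_mul_rr, Complex.I_sq] <;> ring_nf <;>
    norm_num [rr_sq, rr_pow4]

/-- The Werner state W_{ψ₁,1/3} = (1/6)𝟙 + (1/3)Ψ₁ is separable. -/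
theorem werner_third_separable :
    IsSepState ((6 : ℂ)⁻¹ • (1 : Matrix (Fin 2 × Fin 2) (Fin 2 × Fin 2) ℂ)
      + (3 : ℂ)⁻¹ • proj (bell 0)) := by
  refine ⟨6, fun _ => (6:ℝ)⁻¹, fun i => proj (aVec i), fun i => proj (bVec i),
    fun _ => by norm_num, ?_, aVec_density, bVec_density, werner_eq⟩
  norm_num
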